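/- Let α > 0, R > 0 and a < b be real numbers. Then ∫₀^R ∫_a^b r^{3+α} / ( r² + z² − z √(r² + z²) )² dz dr < ∞; that is, the weighted double integral expressing ‖∇_∥ ln(√(r²+z²) − z)‖²_{L²_α} over the cylinder of radius R and heights between a and b is finite for every α > 0. -/

import Mathlib

open MeasureTheory Set

/-- **Finiteness of the weighted norm of the in-plane gradient of the endpoint
log factor.** For `α > 0`, `R > 0` and `a < b`, the double integral
`∫₀^R ∫_a^b r^{3+α}/(r² + z² - z√(r² + z²))² dz dr` is finite; i.e. the integrand
is integrable on `(0, R) × (a, b)`. -/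
theorem weighted_gradient_integrable
    (α R a b : ℝ) (hα : 0 < α) (hR : 0 < R) (hab : a < b) :
    MeasureTheory.IntegrableOn
      (fun p : ℝ × ℝ =>
        p.1 ^ (3 + α) /
          (p.1 ^ 2 + p.2 ^ 2 - p.2 * Real.sqrt (p.1 ^ 2 + p.2 ^ 2)) ^ 2)
      (Set.Ioo 0 R ×ˢ Set.Ioo a b) := by
  -- dominating function : p ↦ 4 * p.1 ^ (α - 1)
  have h1 : IntegrableOn (fun r : ℝ => 4 * r ^ (α - 1)) (Ioo 0 R) := by
    have h := (intervalIntegral.intervalIntegrable_rpow'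
      (a := 0) (b := R) (r := α - 1) (by linarith)).1
    exact (h.mono_set Ioo_subset_Ioc_self).const_mul 4
  have h2 : IntegrableOn (fun _ : ℝ => (1 : ℝ)) (Ioo a b) := by
    apply (integrableOn_const_iff).mpr
    exact Or.inr measure_Ioo_lt_top
  have hg : IntegrableOn (fun p : ℝ × ℝ => 4 * p.1 ^ (α - 1))
      (Ioo 0 R ×ˢ Ioo a b) := by
    have := h1.mul_prod h2
    simp only [mul_one] at this
    rwa [IntegrableOn, Measure.volume_eq_prod, ← Measure.prod_restrict]
  have hmeas : AEStronglyMeasurable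
      (fun p : ℝ × ℝ =>
        p.1 ^ (3 + α) /
          (p.1 ^ 2 + p.2 ^ 2 - p.2 * Real.sqrt (p.1 ^ 2 + p.2 ^ 2)) ^ 2)
      (volume.restrict (Ioo 0 R ×ˢ Ioo a b)) := by
    apply Measurable.aestronglyMeasurable
    fun_prop
  apply hg.mono' hmeas
  filter_upwards [ae_restrict_mem ((measurableSet_Ioo).prod measurableSet_Ioo)]
  rintro ⟨r, z⟩ ⟨hr, _⟩
  simp only at *
  have hr0 : (0 : ℝ) < r := hr.1
  set s := Real.sqrt (r ^ 2 + z ^ 2) with hs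
  have hsq : s ^ 2 = r ^ 2 + z ^ 2 := Real.sq_sqrt (by positivity)
  have hzs : z ≤ s := by
    calc z ≤ |z| := le_abs_self z
    _ = Real.sqrt (z ^ 2) := (Real.sqrt_sq_eq_abs z).symm
    _ ≤ s := Real.sqrt_le_sqrt (by nlinarith)
  have hD : r ^ 2 / 2 ≤ r ^ 2 + z ^ 2 - z * s := by nlinarith [sq_nonneg (s - z)]
  have hDpos : 0 < r ^ 2 + z ^ 2 - z * s := lt_of_lt_of_le (by positivity) hD
  have hnum : (0 : ℝ) ≤ r ^ (3 + α) := Real.rpow_nonneg hr0.le _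
  rw [Real.norm_of_nonneg (by positivity)]
  have hsq' : (r ^ 2 / 2) ^ 2 ≤ (r ^ 2 + z ^ 2 - z * s) ^ 2 :=
    pow_le_pow_left₀ (by positivity) hD 2
  calc r ^ (3 + α) / (r ^ 2 + z ^ 2 - z * s) ^ 2
      ≤ r ^ (3 + α) / (r ^ 2 / 2) ^ 2 :=
        div_le_div_of_nonneg_left hnum (by positivity) hsq'
    _ = 4 * r ^ (α - 1) := by
        have : r ^ (3 + α) = r ^ (α - 1) * r ^ (4 : ℕ) := by
          rw [← Real.rpow_natCast r 4, ← Real.rpow_add hr0]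
          congr 1
          push_cast
          ring
        rw [this]
        field_simp
        ring
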